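/- For a prime p, the number of entries among the first p^n rows of Pascal's triangle (rows 0 through p^n − 1) that are not divisible by p equals (p(p+1)/2)^n. -/

import Mathlib

open Finset

private lemma aux_not_dvd_choose {p a b : ℕ} (hp : p.Prime) (ha : a < p) (hb : b ≤ a) :
    ¬ p ∣ a.choose b := by
  intro h
  have h2 : p ∣ a.factorial := by
    rw [← Nat.choose_mul_factorial_mul_factorial hb]
    exact (h.mul_right _).mul_right _
  have := (Nat.Prime.dvd_factorial hp).mp h2
  omega

private lemma aux_dvd_iff {p : ℕ} (hp : p.Prime) (m k : ℕ) :
    p ∣ m.choose k ↔ p ∣ (m % p).choose (k % p) * ((m / p).choose (k / p)) := by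
  haveI : Fact p.Prime := ⟨hp⟩
  have h := Choose.choose_modEq_choose_mod_mul_choose_div_nat (n := m) (k := k) (p := p)
  constructor <;> intro hd
  · have := ((Nat.modEq_zero_iff_dvd).mpr hd).symm.trans h
    exact (Nat.modEq_zero_iff_dvd).mp this.symm
  · have := h.trans ((Nat.modEq_zero_iff_dvd).mpr hd)
    exact (Nat.modEq_zero_iff_dvd).mp this

private lemma aux_row_rec {p : ℕ} (hp : p.Prime) (m : ℕ) :
    ((Finset.range (m + 1)).filter (fun k => ¬ p ∣ m.choose k)).card =
      (m % p + 1) *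
        ((Finset.range (m / p + 1)).filter (fun k => ¬ p ∣ (m / p).choose k)).card := by
  have hp0 : 0 < p := hp.pos
  rw [← Finset.card_range (m % p + 1), ← Finset.card_product]
  apply Finset.card_bij' (fun k _ => (k % p, k / p)) (fun x _ => x.1 + p * x.2)
  · intro k hk
    simp only [Finset.mem_filter, Finset.mem_range] at hk
    obtain ⟨hkm, hnd⟩ := hk
    rw [aux_dvd_iff hp] at hnd
    have h1 : ¬ p ∣ (m % p).choose (k % p) := fun h => hnd (h.mul_right _)
    have h2 : ¬ p ∣ (m / p).choose (k / p) := fun h => hnd (h.mul_left _)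
    have hne : (m % p).choose (k % p) ≠ 0 := by rintro h; exact h1 (h ▸ dvd_zero p)
    have hne2 : (m / p).choose (k / p) ≠ 0 := by rintro h; exact h2 (h ▸ dvd_zero p)
    have hle1 : k % p ≤ m % p := by by_contra h; exact hne (Nat.choose_eq_zero_of_lt (by omega))
    have hle2 : k / p ≤ m / p := by by_contra h; exact hne2 (Nat.choose_eq_zero_of_lt (by omega))
    simp only [Finset.mem_product, Finset.mem_range, Finset.mem_filter]
    exact ⟨by omega, by omega, h2⟩
  · rintro ⟨r, q⟩ hx
    simp only [Finset.mem_product, Finset.mem_range, Finset.mem_filter] at hx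
    obtain ⟨hr, hq, hnd⟩ := hx
    have hrp : r < p := lt_of_lt_of_le hr (by have := Nat.mod_lt m hp0; omega)
    have hmod : (r + p * q) % p = r := by rw [Nat.add_mul_mod_self_left, Nat.mod_eq_of_lt hrp]
    have hdiv : (r + p * q) / p = q := by rw [Nat.add_mul_div_left _ _ hp0, Nat.div_eq_of_lt hrp]; omega
    have hqne : (m / p).choose q ≠ 0 := fun h => hnd (h ▸ dvd_zero p)
    have hqle : q ≤ m / p := by by_contra h; exact hqne (Nat.choose_eq_zero_of_lt (by omega))
    simp only [Finset.mem_filter, Finset.mem_range]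
    constructor
    · have : r + p * q ≤ m % p + p * (m / p) := by
        have : p * q ≤ p * (m / p) := Nat.mul_le_mul_left p hqle
        omega
      have hm : m % p + p * (m / p) = m := by rw [Nat.mod_add_div]
      omega
    · rw [aux_dvd_iff hp, hmod, hdiv]
      intro h
      rcases (Nat.Prime.dvd_mul hp).mp h with h | h
      · exact aux_not_dvd_choose hp (Nat.mod_lt m hp0) (by omega) h
      · exact hnd h
  · intro k _; exact Nat.mod_add_div k p
  · rintro ⟨r, q⟩ hx
    simp only [Finset.mem_product, Finset.mem_range, Finset.mem_filter] at hx
    have hrp : r < p := lt_of_lt_of_le hx.1 (by have := Nat.mod_lt m hp0; omega)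
    simp [Nat.add_mul_mod_self_left, Nat.mod_eq_of_lt hrp,
      Nat.add_mul_div_left _ _ hp0, Nat.div_eq_of_lt hrp]

/-- Among rows `0` through `p^n - 1` of Pascal's triangle, the number of entries
not divisible by the prime `p` is `(p(p+1)/2)^n`. -/
theorem count_not_dvd_first_pow_rows (p : ℕ) (hp : p.Prime) (n : ℕ) :
    (∑ m ∈ Finset.range (p ^ n),
        ((Finset.range (m + 1)).filter (fun k => ¬ p ∣ m.choose k)).card) =
      (p * (p + 1) / 2) ^ n := by
  have hp0 : 0 < p := hp.pos
  set g : ℕ → ℕ := fun m => ((Finset.range (m + 1)).filter (fun k => ¬ p ∣ m.choose k)).card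
    with hg
  have hgauss : ∑ a ∈ Finset.range p, (a + 1) = p * (p + 1) / 2 := by
    have h := Finset.sum_range_id_mul_two (p + 1)
    rw [Nat.add_sub_cancel] at h
    have h2 : ∑ i ∈ Finset.range (p + 1), i = ∑ a ∈ Finset.range p, (a + 1) := by
      rw [Finset.sum_range_succ' (fun i => i) p]; simp
    have hc : p * (p + 1) = (p + 1) * p := Nat.mul_comm _ _
    omega
  have hblock : ∀ N : ℕ, ∑ m ∈ Finset.range (N * p), g m =
      ∑ b ∈ Finset.range N, ∑ a ∈ Finset.range p, g (b * p + a) := by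
    intro N
    induction N with
    | zero => simp
    | succ N ih =>
      rw [Nat.succ_mul, Finset.sum_range_add, ih, Finset.sum_range_succ]
  induction n with
  | zero => simp [hg, Finset.filter_singleton, Nat.choose, Nat.dvd_one, hp.ne_one]
  | succ n ih =>
    have : p ^ (n + 1) = p ^ n * p := by ring
    rw [this, hblock]
    have hterm : ∀ b, ∑ a ∈ Finset.range p, g (b * p + a) = (p * (p + 1) / 2) * g b := by
      intro b
      have : ∀ a ∈ Finset.range p, g (b * p + a) = (a + 1) * g b := by
        intro a ha
        rw [Finset.mem_range] at ha
        rw [hg]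
        have hba : b * p + a = p * b + a := by ring
        have hmod : (b * p + a) % p = a := by
          rw [hba, Nat.mul_add_mod, Nat.mod_eq_of_lt ha]
        have hdiv : (b * p + a) / p = b := by
          rw [hba, Nat.mul_add_div hp0, Nat.div_eq_of_lt ha]
          omega
        simp only
        rw [aux_row_rec hp (b * p + a), hmod, hdiv]
      rw [Finset.sum_congr rfl this, ← Finset.sum_mul, hgauss]
    rw [Finset.sum_congr rfl (fun b _ => hterm b), ← Finset.mul_sum, ih, pow_succ]
    ring
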